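/- Transfer of positive semidefiniteness: suppose P = R T R*, where R is a nonnegative Ω×Ω' matrix with all row sums 1 and πR = μ, T is a transition matrix on Ω' reversible with respect to μ whose symmetrization is positive semidefinite, and R*(y,x) = (π(x)/μ(y))R(x,y). Then P is reversible with respect to π and all eigenvalues of P are nonnegative. -/

import Mathlib

theorem stmt_16 {Ω Ω' : Type*} [Fintype Ω] [DecidableEq Ω] [Fintype Ω'] [DecidableEq Ω']
    (π : Ω → ℝ) (hπ : ∀ x, 0 < π x) (hπs : ∑ x, π x = 1)
    (μ : Ω' → ℝ) (hμ : ∀ y, 0 < μ y) (hμs : ∑ y, μ y = 1)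
    (R : Matrix Ω Ω' ℝ) (hRnn : ∀ x y, 0 ≤ R x y)
    (hRrow : ∀ x, ∑ y, R x y = 1)
    (hπR : ∀ y, ∑ x, π x * R x y = μ y)
    (Rstar : Matrix Ω' Ω ℝ)
    (hRstar : ∀ y x, Rstar y x = π x * R x y / μ y)
    (T : Matrix Ω' Ω' ℝ) (hTnn : ∀ y z, 0 ≤ T y z) (hTrow : ∀ y, ∑ z, T y z = 1)
    (hTrev : ∀ y z, μ y * T y z = μ z * T z y)
    (hTpsd : ∀ (lam : ℝ) (v : Ω' → ℝ), v ≠ 0 → T.mulVec v = lam • v → 0 ≤ lam)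
    (P : Matrix Ω Ω ℝ) (hP : P = R * T * Rstar) :
    (∀ x y, π x * P x y = π y * P y x) ∧
    (∀ (lam : ℝ) (v : Ω → ℝ), v ≠ 0 → P.mulVec v = lam • v → 0 ≤ lam) := by
  have hμne : ∀ y, μ y ≠ 0 := fun y => (hμ y).ne'
  have hsqrtpos : ∀ y, 0 < Real.sqrt (μ y) := fun y => Real.sqrt_pos.mpr (hμ y)
  have hsqrtne : ∀ y, Real.sqrt (μ y) ≠ 0 := fun y => (hsqrtpos y).ne'
  have hsq : ∀ y, Real.sqrt (μ y) * Real.sqrt (μ y) = μ y :=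
    fun y => Real.mul_self_sqrt (hμ y).le
  have hTdiv : ∀ a b, T a b / μ b = T b a / μ a := by
    intro a b
    rw [div_eq_div_iff (hμne b) (hμne a)]
    linear_combination hTrev a b
  -- expansion of π x * P x y
  have key : ∀ x y, π x * P x y =
      ∑ a, ∑ b, (π x * R x a) * (π y * R y b) * (T a b / μ b) := by
    intro x y
    rw [hP]
    simp only [Matrix.mul_apply, Finset.mul_sum, Finset.sum_mul]
    conv_rhs => rw [Finset.sum_comm]
    apply Finset.sum_congr rfl; intro b _
    apply Finset.sum_congr rfl; intro a _
    rw [hRstar]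
    field_simp
  have hrev : ∀ x y, π x * P x y = π y * P y x := by
    intro x y
    rw [key x y, key y x, Finset.sum_comm]
    apply Finset.sum_congr rfl; intro a _
    apply Finset.sum_congr rfl; intro b _
    rw [hTdiv]
    ring
  refine ⟨hrev, ?_⟩
  -- the symmetrization of T
  set S : Matrix Ω' Ω' ℝ :=
    Matrix.of fun a b => Real.sqrt (μ a) * T a b / Real.sqrt (μ b) with hS
  have hSsym : S.IsHermitian := by
    ext a b
    simp only [Matrix.conjTranspose_apply, hS, Matrix.of_apply, star_trivial]
    rw [div_eq_div_iff (hsqrtne a) (hsqrtne b)]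
    linear_combination T b a * hsq b - T a b * hsq a - hTrev a b
  have hSpsd : S.PosSemidef := by
    apply (Matrix.IsHermitian.posSemidef_iff_eigenvalues_nonneg hSsym).mpr
    intro j
    set w : Ω' → ℝ := ⇑(hSsym.eigenvectorBasis j) with hw
    have hwne : w ≠ 0 := by
      have := hSsym.eigenvectorBasis.orthonormal.ne_zero j
      intro h
      apply this
      ext a
      exact congrFun h a
    have hweig : S.mulVec w = hSsym.eigenvalues j • w := hSsym.mulVec_eigenvectorBasis j
    set v' : Ω' → ℝ := fun a => w a / Real.sqrt (μ a) with hv'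
    have hv'ne : v' ≠ 0 := by
      intro h
      apply hwne
      ext a
      have h2 : w a / Real.sqrt (μ a) = 0 := congrFun h a
      show w a = 0
      rcases div_eq_zero_iff.mp h2 with h3 | h3
      · exact h3
      · exact absurd h3 (hsqrtne a)
    apply hTpsd _ v' hv'ne
    ext a
    have hcomp := congrFun hweig a
    simp only [Matrix.mulVec, dotProduct, hS, Matrix.of_apply, Pi.smul_apply,
      smul_eq_mul] at hcomp ⊢
    have lhs_eq : ∑ b, T a b * v' b = (∑ b, Real.sqrt (μ a) * T a b / Real.sqrt (μ b) * w b)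
        / Real.sqrt (μ a) := by
      rw [Finset.sum_div]
      apply Finset.sum_congr rfl; intro b _
      rw [hv']
      simp only
      field_simp [hsqrtne]
    rw [lhs_eq, hcomp, hv']
    simp only
    ring
  intro lam v hvne heig
  set u : Ω' → ℝ := Rstar.mulVec v with hu
  have huμ : ∀ a, μ a * u a = ∑ x, π x * R x a * v x := by
    intro a
    simp only [hu, Matrix.mulVec, dotProduct, Finset.mul_sum]
    apply Finset.sum_congr rfl; intro x _
    rw [hRstar]
    field_simp [hμne]
  set q : Ω' → ℝ := T.mulVec u with hq
  set w : Ω' → ℝ := fun a => Real.sqrt (μ a) * u a with hw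
  have hPv : P.mulVec v = R.mulVec q := by
    rw [hP, hq, hu, Matrix.mulVec_mulVec, Matrix.mulVec_mulVec]
  have hLHS : ∑ x, π x * v x * P.mulVec v x = ∑ a, (μ a * u a) * q a := by
    rw [hPv]
    simp only [Matrix.mulVec, dotProduct, Finset.mul_sum]
    rw [Finset.sum_comm]
    apply Finset.sum_congr rfl; intro a _
    rw [huμ a, Finset.sum_mul]
    apply Finset.sum_congr rfl; intro x _
    ring
  have hRHS : dotProduct w (S.mulVec w) = ∑ a, (μ a * u a) * q a := by
    simp only [dotProduct, Matrix.mulVec, hS, Matrix.of_apply, hq]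
    apply Finset.sum_congr rfl; intro a _
    rw [Finset.mul_sum, Finset.mul_sum]
    apply Finset.sum_congr rfl; intro b _
    rw [hw]
    simp only
    field_simp [hsqrtne]
    linear_combination (u a * T a b * u b) * hsq a
  have hQnn : 0 ≤ ∑ x, π x * v x * P.mulVec v x := by
    rw [hLHS, ← hRHS]
    have := hSpsd.dotProduct_mulVec_nonneg w
    simpa using this
  have hEq : ∑ x, π x * v x * P.mulVec v x = lam * ∑ x, π x * v x ^ 2 := by
    rw [heig, Finset.mul_sum]
    apply Finset.sum_congr rfl; intro x _
    simp only [Pi.smul_apply, smul_eq_mul]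
    ring
  obtain ⟨x0, hx0⟩ : ∃ x, v x ≠ 0 := by
    by_contra h
    push_neg at h
    exact hvne (funext h)
  have hpos : 0 < ∑ x, π x * v x ^ 2 := by
    apply Finset.sum_pos' (fun x _ => mul_nonneg (hπ x).le (sq_nonneg _))
    exact ⟨x0, Finset.mem_univ _, mul_pos (hπ x0) (pow_two_pos_of_ne_zero hx0)⟩
  rw [hEq] at hQnn
  nlinarith [hQnn, hpos]
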